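/- In a minimal weakly mixing system (X,T), for every point x ∈ X the set of points proximal to x is dense (indeed contains a dense G_δ set). -/

import Mathlib

/-- The group of self-homeomorphisms under composition, so that `T ^ n` (`n : ℤ`)
denotes the `n`-th iterate of `T`. -/
instance Homeomorph.instGroupOld {X : Type*} [TopologicalSpace X] : Group (X ≃ₜ X) where
  mul f g := g.trans f
  one := Homeomorph.refl X
  inv := Homeomorph.symm
  mul_assoc _ _ _ := Homeomorph.ext fun _ => rfl
  one_mul _ := Homeomorph.ext fun _ => rfl
  mul_one _ := Homeomorph.ext fun _ => rfl
  inv_mul_cancel f := Homeomorph.ext fun x => f.symm_apply_apply x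

/-- The orbit closure of a point under a homeomorphism. -/
def orbitCl {X : Type*} [TopologicalSpace X] (T : X ≃ₜ X) (p : X) : Set X :=
  closure {q | ∃ n : ℤ, (T ^ n) p = q}

/-- A (minimal) dynamical system: every orbit closure is everything. -/
def IsMinimalSys {X : Type*} [TopologicalSpace X] (T : X ≃ₜ X) : Prop :=
  ∀ x : X, orbitCl T x = Set.univ

/-- Totally minimal: every nonzero power is minimal. -/
def IsTotallyMinimal {X : Type*} [TopologicalSpace X] (T : X ≃ₜ X) : Prop :=
  ∀ n : ℤ, n ≠ 0 → IsMinimalSys (T ^ n)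

/-- The graph Γ_n = {(T^n x, x) : x ∈ X}. -/
def graphPow {X : Type*} [TopologicalSpace X] (T : X ≃ₜ X) (n : ℤ) : Set (X × X) :=
  {p | ∃ x : X, p = ((T ^ n) x, x)}

/-- POD: totally minimal and for distinct u, v some graph Γ_n (n ≠ 0) lies in the
orbit closure of (u, v) under T × T. -/
def IsPOD {X : Type*} [TopologicalSpace X] (T : X ≃ₜ X) : Prop :=
  IsMinimalSys T ∧ IsTotallyMinimal T ∧
    ∀ u v : X, u ≠ v → ∃ n : ℤ, n ≠ 0 ∧
      graphPow T n ⊆ orbitCl (T.prodCongr T) (u, v)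

/-- Doubly minimal: minimal, and every orbit closure of T × T is either everything
or a graph Γ_m. -/
def IsDoublyMinimal {X : Type*} [TopologicalSpace X] (T : X ≃ₜ X) : Prop :=
  IsMinimalSys T ∧
    ∀ p : X × X, orbitCl (T.prodCongr T) p = Set.univ ∨
      ∃ m : ℤ, orbitCl (T.prodCongr T) p = graphPow T m

/-- A factor map: continuous equivariant surjection. -/
def IsFactorMap {X Y : Type*} [TopologicalSpace X] [TopologicalSpace Y]
    (T : X ≃ₜ X) (S : Y ≃ₜ Y) (π : X → Y) : Prop :=
  Continuous π ∧ Function.Surjective π ∧ ∀ x, π (T x) = S (π x)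

/-- Disjointness: the only closed invariant subset of the product projecting
onto both coordinates is the whole product. -/
def SysDisjoint {X Y : Type*} [TopologicalSpace X] [TopologicalSpace Y]
    (T : X ≃ₜ X) (S : Y ≃ₜ Y) : Prop :=
  ∀ M : Set (X × Y), IsClosed M → (T.prodCongr S) '' M = M →
    Prod.fst '' M = Set.univ → Prod.snd '' M = Set.univ → M = Set.univ

/-- A recurrent point: in the closure of its forward orbit with positive times. -/
def IsRecurrentPt {X : Type*} [TopologicalSpace X] (T : X ≃ₜ X) (x : X) : Prop :=
  x ∈ closure {q | ∃ n : ℕ, 1 ≤ n ∧ (T ^ n) x = q}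

/-- A proximal pair: the orbits come arbitrarily close together. -/
def IsProximal {X : Type*} [PseudoMetricSpace X] (T : X ≃ₜ X) (x x' : X) : Prop :=
  ∀ ε > 0, ∃ n : ℤ, dist ((T ^ n) x) ((T ^ n) x') < ε

/-- A distal point: proximal only to itself. -/
def IsDistalPt {X : Type*} [PseudoMetricSpace X] (T : X ≃ₜ X) (x : X) : Prop :=
  ∀ x', IsProximal T x x' → x' = x

/-- A minimal subset: nonempty, closed, invariant, with all orbits dense in it. -/
def IsMinimalSubset {X : Type*} [TopologicalSpace X] (T : X ≃ₜ X) (M : Set X) : Prop :=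
  M.Nonempty ∧ IsClosed M ∧ (T : X ≃ₜ X) '' M = M ∧
    ∀ p ∈ M, M ⊆ closure {q | ∃ n : ℤ, (T ^ n) p = q}

/-- Topological transitivity. -/
def IsTopTransitive {X : Type*} [TopologicalSpace X] (T : X ≃ₜ X) : Prop :=
  ∀ U V : Set X, IsOpen U → IsOpen V → U.Nonempty → V.Nonempty →
    ∃ n : ℤ, ((T ^ n) '' U ∩ V).Nonempty

/-- Weak mixing: the product system is topologically transitive. -/
def IsWeaklyMixing {X : Type*} [TopologicalSpace X] (T : X ≃ₜ X) : Prop :=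
  IsTopTransitive (T.prodCongr T)

section Aux

variable {X : Type*} [TopologicalSpace X]

lemma homeomorph_mul_apply (f g : X ≃ₜ X) (x : X) : (f * g) x = f (g x) := rfl

/-- `f ↦ f.prodCongr f` as a monoid hom. -/
def prodCongrHom : (X ≃ₜ X) →* ((X × X) ≃ₜ (X × X)) :=
  MonoidHom.mk' (fun f => f.prodCongr f) (fun _ _ => Homeomorph.ext fun _ => rfl)

lemma prodCongr_zpow_apply (T : X ≃ₜ X) (n : ℤ) (p : X × X) :
    ((T.prodCongr T) ^ n) p = ((T ^ n) p.1, (T ^ n) p.2) := by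
  have h : (prodCongrHom T) ^ n = prodCongrHom (T ^ n) := (map_zpow prodCongrHom T n).symm
  have : ((T.prodCongr T) ^ n) p = (prodCongrHom (T ^ n)) p := by
    rw [← h]; rfl
  exact this

/-- The set of times `n` such that `T^n` maps some point of `U` into `V`. -/
def hitSet (T : X ≃ₜ X) (U V : Set X) : Set ℤ := {n | ∃ u ∈ U, (T ^ n) u ∈ V}

lemma hitSet_nonempty (T : X ≃ₜ X) (hwm : IsWeaklyMixing T)
    {U V : Set X} (hUo : IsOpen U) (hVo : IsOpen V) (hUn : U.Nonempty) (hVn : V.Nonempty) :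
    (hitSet T U V).Nonempty := by
  obtain ⟨n, p, hp1, hp2⟩ := hwm (U ×ˢ U) (V ×ˢ V) (hUo.prod hUo) (hVo.prod hVo)
    (hUn.prod hUn) (hVn.prod hVn)
  obtain ⟨q, hq, rfl⟩ := hp1
  refine ⟨n, q.1, hq.1, ?_⟩
  rw [prodCongr_zpow_apply] at hp2
  exact hp2.1

/-- Furstenberg's intersection trick. -/
lemma hitSet_pair (T : X ≃ₜ X) (hwm : IsWeaklyMixing T)
    {U₁ V₁ U₂ V₂ : Set X} (hU₁o : IsOpen U₁) (hV₁o : IsOpen V₁)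
    (hU₂o : IsOpen U₂) (hV₂o : IsOpen V₂)
    (hU₁n : U₁.Nonempty) (hV₁n : V₁.Nonempty) (hU₂n : U₂.Nonempty) (hV₂n : V₂.Nonempty) :
    ∃ U₃ V₃ : Set X, IsOpen U₃ ∧ IsOpen V₃ ∧ U₃.Nonempty ∧ V₃.Nonempty ∧
      hitSet T U₃ V₃ ⊆ hitSet T U₁ V₁ ∩ hitSet T U₂ V₂ := by
  obtain ⟨m, p, hp1, hp2⟩ := hwm (U₁ ×ˢ V₁) (U₂ ×ˢ V₂) (hU₁o.prod hV₁o) (hU₂o.prod hV₂o)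
    (hU₁n.prod hV₁n) (hU₂n.prod hV₂n)
  obtain ⟨q, hq, rfl⟩ := hp1
  rw [prodCongr_zpow_apply] at hp2
  refine ⟨U₁ ∩ (fun a => (T ^ m) a) ⁻¹' U₂, V₁ ∩ (fun a => (T ^ m) a) ⁻¹' V₂,
    hU₁o.inter (hU₂o.preimage (T ^ m).continuous),
    hV₁o.inter (hV₂o.preimage (T ^ m).continuous),
    ⟨q.1, hq.1, hp2.1⟩, ⟨q.2, hq.2, hp2.2⟩, ?_⟩
  rintro n ⟨u, ⟨hu1, hu2⟩, hv1, hv2⟩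
  refine ⟨⟨u, hu1, hv1⟩, (T ^ m) u, hu2, ?_⟩
  have : (T ^ n) ((T ^ m) u) = (T ^ m) ((T ^ n) u) := by
    rw [← homeomorph_mul_apply, ← homeomorph_mul_apply, ← zpow_add, ← zpow_add, add_comm]
  rw [this]
  exact hv2

lemma hitSet_finite {ι : Type*} (T : X ≃ₜ X) (hwm : IsWeaklyMixing T)
    (s : Finset ι) (V : ι → Set X) (hVo : ∀ i, IsOpen (V i)) (hVn : ∀ i, (V i).Nonempty)
    {U : Set X} (hUo : IsOpen U) (hUn : U.Nonempty) :
    ∃ U₃ V₃ : Set X, IsOpen U₃ ∧ IsOpen V₃ ∧ U₃.Nonempty ∧ V₃.Nonempty ∧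
      hitSet T U₃ V₃ ⊆ ⋂ i ∈ s, hitSet T U (V i) := by
  classical
  induction s using Finset.induction_on with
  | empty =>
      exact ⟨U, Set.univ, hUo, isOpen_univ, hUn, ⟨hUn.choose, trivial⟩, by simp⟩
  | insert _ _ ha ih =>
      rename_i a s'
      obtain ⟨U₃, V₃, hU₃o, hV₃o, hU₃n, hV₃n, hsub⟩ := ih
      obtain ⟨U₄, V₄, hU₄o, hV₄o, hU₄n, hV₄n, hsub₄⟩ :=
        hitSet_pair T hwm hU₃o hV₃o hUo (hVo a) hU₃n hV₃n hUn (hVn a)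
      refine ⟨U₄, V₄, hU₄o, hV₄o, hU₄n, hV₄n, ?_⟩
      intro n hn
      have h := hsub₄ hn
      simp only [Set.mem_iInter] at *
      intro i hi
      rcases Finset.mem_insert.mp hi with rfl | hi'
      · exact h.2
      · exact Set.mem_iInter.mp (Set.mem_iInter.mp (hsub h.1) i) hi'

end Aux

section Metric

variable {X : Type*} [MetricSpace X] [CompactSpace X]

/-- The points whose orbit comes within `ε` of the orbit of `x` at some time. -/
def proxSet (T : X ≃ₜ X) (x : X) (ε : ℝ) : Set X :=
  {x' | ∃ n : ℤ, dist ((T ^ n) x) ((T ^ n) x') < ε}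

lemma isOpen_proxSet (T : X ≃ₜ X) (x : X) (ε : ℝ) : IsOpen (proxSet T x ε) := by
  have : proxSet T x ε = ⋃ n : ℤ, (fun x' => (T ^ n) x') ⁻¹' Metric.ball ((T ^ n) x) ε := by
    ext x'
    simp [proxSet, Metric.mem_ball, dist_comm]
  rw [this]
  exact isOpen_iUnion fun n =>
    (Metric.isOpen_ball).preimage (T ^ n).continuous

lemma dense_proxSet (T : X ≃ₜ X) (hwm : IsWeaklyMixing T) (x : X) {ε : ℝ} (hε : 0 < ε) :
    Dense (proxSet T x ε) := by
  rw [dense_iff_inter_open]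
  intro U hUo hUn
  have hε3 : 0 < ε / 3 := by linarith
  -- finite cover of X by ε/3-balls
  obtain ⟨t, ht⟩ := isCompact_univ.elim_finite_subcover (fun z : X => Metric.ball z (ε / 3))
    (fun z => Metric.isOpen_ball)
    (fun z _ => Set.mem_iUnion.mpr ⟨z, Metric.mem_ball_self hε3⟩)
  obtain ⟨U₃, V₃, hU₃o, hV₃o, hU₃n, hV₃n, hsub⟩ :=
    hitSet_finite T hwm t (fun z => Metric.ball z (ε / 3)) (fun z => Metric.isOpen_ball)
      (fun z => ⟨z, Metric.mem_ball_self hε3⟩) hUo hUn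
  obtain ⟨n, hn⟩ := hitSet_nonempty T hwm hU₃o hV₃o hU₃n hV₃n
  have hn' := hsub hn
  -- `T^n x` lies in some ball of the cover
  obtain ⟨z₀, hz₀t, hz₀⟩ : ∃ z₀ ∈ t, (T ^ n) x ∈ Metric.ball z₀ (ε / 3) := by
    have := ht (Set.mem_univ ((T ^ n) x))
    simpa using this
  have hmem : n ∈ hitSet T U (Metric.ball z₀ (ε / 3)) := by
    have := Set.mem_iInter.mp hn' z₀
    exact Set.mem_iInter.mp this hz₀t
  obtain ⟨u, huU, hun⟩ := hmem
  refine ⟨u, huU, n, ?_⟩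
  have h1 : dist ((T ^ n) x) z₀ < ε / 3 := hz₀
  have h2 : dist ((T ^ n) u) z₀ < ε / 3 := hun
  calc dist ((T ^ n) x) ((T ^ n) u) ≤ dist ((T ^ n) x) z₀ + dist z₀ ((T ^ n) u) :=
        dist_triangle _ _ _
    _ < ε / 3 + ε / 3 := by rw [dist_comm z₀]; linarith
    _ < ε := by linarith

end Metric

theorem proximal_cell_dense {X : Type*} [MetricSpace X] [CompactSpace X]
    (T : X ≃ₜ X) (hmin : IsMinimalSys T) (hwm : IsWeaklyMixing T) (x : X) :
    Dense {x' : X | IsProximal T x x'} ∧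
      ∃ G : Set X, G ⊆ {x' : X | IsProximal T x x'} ∧ IsGδ G ∧ Dense G := by
  set G : Set X := ⋂ k : ℕ, proxSet T x (1 / (k + 1)) with hG
  have hGsub : G ⊆ {x' : X | IsProximal T x x'} := by
    intro x' hx' ε hε
    obtain ⟨k, hk⟩ := exists_nat_one_div_lt hε
    have hmem : x' ∈ proxSet T x (1 / (k + 1)) := Set.mem_iInter.mp hx' k
    obtain ⟨n, hn⟩ := hmem
    exact ⟨n, lt_trans hn hk⟩
  have hGδ : IsGδ G := .iInter_of_isOpen fun k => isOpen_proxSet T x _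
  have hGdense : Dense G := dense_iInter_of_isOpen
    (fun k => isOpen_proxSet T x _)
    (fun k => dense_proxSet T hwm x (by positivity))
  exact ⟨hGdense.mono hGsub, G, hGsub, hGδ, hGdense⟩
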